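/- Let N, k, J be positive integers with N > 2^J (k+1). Let Φ_{k,1} and Φ_{k,2^J} be the circulant matrices of the stencils φ_{k,1} and φ_{k,2^J}, and for each i let P_{2^i} be the N×N 0-1 shift-sum matrix with shift 2^i. Then the scale-2^J operator decomposes as Φ_{k,2^J} = P_{2^{J−1}}^{k+1} P_{2^{J−2}}^{k+1} ⋯ P_{2^0}^{k+1} Φ_{k,1}. -/

import Mathlib

open Finset Matrix

/-- The scale-`j` order-`k` multiscale finite-difference stencil, as a vector in `ℝ^N`
(0-indexed by naturals `m < N`). -/
noncomputable def phiR (N k j : ℕ) (m : ℕ) : ℝ :=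
  if m = 0 then (-1 : ℝ) ^ k
  else if m ≤ N - j * (k + 1) then 0
  else (-1 : ℝ) ^ (k + (N - m) / j) * (Nat.choose k ((N - m) / j) : ℝ)

/-- The `N × N` circulant matrix of the stencil `φ_{k,j}`:
`(Φ_{k,j})_{m,n} = (φ_{k,j})_{(m - n) mod N}`. -/
noncomputable def PhiMat (N k j : ℕ) : Matrix (Fin N) (Fin N) ℝ :=
  Matrix.of fun m n => phiR N k j (((m : ℕ) + N - (n : ℕ)) % N)

/-- The `N × N` 0-1 shift-sum matrix `P_s` (0-indexed): entry `(m, n)` is `1` if `n = m`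
or `n = (m + s) mod N`, and `0` otherwise. -/
def Pmat (N s : ℕ) : Matrix (Fin N) (Fin N) ℝ :=
  Matrix.of fun m n =>
    if ((n : ℕ) = (m : ℕ) ∨ (n : ℕ) = ((m : ℕ) + s) % N) then 1 else 0

/- ### Auxiliary machinery -/

lemma aux_key_comm {R : Type*} [CommRing R] (x : R) (k J : ℕ) :
    (((List.range J).reverse.map fun i => (1 + x ^ 2 ^ i) ^ (k + 1)).prod) * (x - 1) ^ k
      = (∑ u ∈ Finset.range (2 ^ J), x ^ u) * (x ^ 2 ^ J - 1) ^ k := by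
  induction J with
  | zero => simp
  | succ J ih =>
    rw [List.range_succ, List.reverse_append]
    simp only [List.reverse_singleton, List.singleton_append, List.map_cons, List.prod_cons]
    rw [mul_assoc, ih]
    have hS : (∑ u ∈ Finset.range (2 ^ (J+1)), x ^ u)
        = (1 + x ^ 2 ^ J) * ∑ u ∈ Finset.range (2 ^ J), x ^ u := by
      have h2 : 2 ^ (J+1) = 2 ^ J + 2 ^ J := by ring
      have h4 : ∑ i ∈ Finset.Ico (2^J) (2^J+2^J), x^i
          = x^(2^J) * ∑ i ∈ Finset.range (2^J), x^i := by
        rw [Finset.sum_Ico_eq_sum_range]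
        simp [pow_add, Finset.mul_sum]
      rw [h2, Finset.range_eq_Ico,
        ← Finset.sum_Ico_consecutive (fun u => x ^ u) (Nat.zero_le (2 ^ J))
          (Nat.le_add_left _ _)]
      rw [h4, ← Finset.range_eq_Ico, add_mul, one_mul]
    rw [hS]
    have hx : x ^ 2 ^ (J+1) = (x ^ 2 ^ J) ^ 2 := by
      rw [← pow_mul, pow_succ]
    rw [hx]
    set y := x ^ 2 ^ J
    set S := ∑ u ∈ Finset.range (2 ^ J), x ^ u
    have h3 : y ^ 2 - 1 = (1 + y) * (y - 1) := by ring
    rw [h3, mul_pow, pow_succ]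
    ring

lemma aux_key {R : Type*} [Ring R] (x : R) (k J : ℕ) :
    (((List.range J).reverse.map fun i => (1 + x ^ 2 ^ i) ^ (k + 1)).prod) * (x - 1) ^ k
      = (∑ u ∈ Finset.range (2 ^ J), x ^ u) * (x ^ 2 ^ J - 1) ^ k := by
  have h := aux_key_comm (Polynomial.X : Polynomial ℤ) k J
  have h2 := congrArg (Polynomial.aeval x : Polynomial ℤ →ₐ[ℤ] R) h
  simpa only [_root_.map_mul, map_sub, _root_.map_one, map_pow, map_add, map_sum,
    Polynomial.aeval_X, map_list_prod, List.map_map, Function.comp_def] using h2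

lemma aux_stencil_poly {R : Type*} [CommRing R] (x : R) (k j : ℕ) (hj : 0 < j) :
    (∑ u ∈ Finset.range j, x ^ u) * (x ^ j - 1) ^ k
      = ∑ r ∈ Finset.range (j * (k + 1)),
          ((-1 : R) ^ (k + r / j) * (Nat.choose k (r / j) : R)) * x ^ r := by
  rw [sub_pow, Finset.sum_mul_sum, ← Finset.sum_product']
  refine Finset.sum_nbij' (i := fun p => p.1 + j * p.2) (j := fun r => (r % j, r / j))
    ?_ ?_ ?_ ?_ ?_
  · rintro ⟨u, t⟩ hp
    simp only [Finset.mem_product, Finset.mem_range] at hp ⊢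
    nlinarith [hp.1, hp.2]
  · intro r hr
    simp only [Finset.mem_range] at hr
    simp only [Finset.mem_product, Finset.mem_range]
    constructor
    · exact Nat.mod_lt _ hj
    · rw [Nat.div_lt_iff_lt_mul hj, mul_comm]
      exact hr
  · rintro ⟨u, t⟩ hp
    simp only [Finset.mem_product, Finset.mem_range] at hp
    have h1 : (u + j * t) / j = t := by
      rw [Nat.add_mul_div_left _ _ hj, Nat.div_eq_of_lt hp.1, Nat.zero_add]
    have h2 : (u + j * t) % j = u := by
      rw [Nat.add_mul_mod_self_left, Nat.mod_eq_of_lt hp.1]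
    simp [h1, h2]
  · intro r _
    simp [Nat.mod_add_div]
  · rintro ⟨u, t⟩ hp
    simp only [Finset.mem_product, Finset.mem_range] at hp
    have h1 : (u + j * t) / j = t := by
      rw [Nat.add_mul_div_left _ _ hj, Nat.div_eq_of_lt hp.1, Nat.zero_add]
    rw [h1, add_comm t k]
    ring

section Shift

variable {N : ℕ} [NeZero N]

open Fin.NatCast

/-- The circulant matrix generated by a single `1` at position `a`. -/
noncomputable def Emat (a : Fin N) : Matrix (Fin N) (Fin N) ℝ :=
  Matrix.circulant (Pi.single a 1)

lemma Emat_zero : Emat (0 : Fin N) = 1 := Matrix.circulant_single_one ℝ (Fin N)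

lemma Emat_mul (a b : Fin N) : Emat a * Emat b = Emat (a + b) := by
  unfold Emat
  rw [Matrix.circulant_mul]
  congr 1
  funext i
  simp only [Matrix.mulVec_single, mul_one, Matrix.circulant_apply, Pi.single_apply,
    sub_eq_iff_eq_add]
  simp [Matrix.circulant_apply, Pi.single_apply, sub_eq_iff_eq_add]

lemma Emat_pow (a : Fin N) (m : ℕ) : (Emat a) ^ m = Emat (m • a) := by
  induction m with
  | zero => simpa using Emat_zero.symm
  | succ m ih => rw [pow_succ, ih, Emat_mul, succ_nsmul]

lemma Emat_pow_natCast (m : ℕ) : (Emat (-1 : Fin N)) ^ m = Emat (-(m : Fin N)) := by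
  rw [Emat_pow]
  simp [nsmul_eq_mul]

lemma circulant_sum {ι : Type*} (s : Finset ι) (f : ι → (Fin N → ℝ)) :
    Matrix.circulant (∑ i ∈ s, f i) = ∑ i ∈ s, Matrix.circulant (f i) := by
  ext m n
  simp [Matrix.circulant_apply, Finset.sum_apply, Matrix.sum_apply]

/-- `PhiMat` is the circulant matrix of `phiR`. -/
lemma PhiMat_circulant (k j : ℕ) :
    PhiMat N k j = Matrix.circulant (fun d : Fin N => phiR N k j d.val) := by
  ext m n
  simp only [PhiMat, Matrix.of_apply, Matrix.circulant_apply]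
  congr 1
  rw [Fin.sub_def]
  simp only []
  congr 1
  omega

/-- The main circulant factorization of `PhiMat`. -/
lemma PhiMat_eq (k j : ℕ) (hj : 0 < j) (hjk : j * (k + 1) ≤ N) :
    PhiMat N k j
      = (∑ u ∈ Finset.range j, (Emat (-1 : Fin N)) ^ u)
          * ((Emat (-1 : Fin N)) ^ j - 1) ^ k := by
  -- transfer the commutative polynomial identity through `aeval`
  set x := Emat (-1 : Fin N) with hx
  have hpoly := aux_stencil_poly (Polynomial.X : Polynomial ℝ) k j hj
  have h2 := congrArg (Polynomial.aeval x : Polynomial ℝ →ₐ[ℝ] Matrix (Fin N) (Fin N) ℝ) hpoly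
  simp only [_root_.map_mul, map_sub, _root_.map_one, map_pow, map_add, map_sum,
    Polynomial.aeval_X, map_neg, map_natCast] at h2
  rw [h2]
  -- now identify the right-hand side with the circulant of `phiR`
  have hterm : ∀ r : ℕ,
      (-1 : Matrix (Fin N) (Fin N) ℝ) ^ (k + r / j) * ((Nat.choose k (r / j) : ℕ) : Matrix (Fin N) (Fin N) ℝ) * x ^ r
        = Matrix.circulant ((((-1 : ℝ) ^ (k + r / j)) * (Nat.choose k (r / j) : ℝ)) • (Pi.single (-(r : Fin N)) 1 : Fin N → ℝ)) := by
    intro r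
    have hneg : (-1 : Matrix (Fin N) (Fin N) ℝ) = ((-1 : ℝ) • 1) := by
      rw [neg_one_smul]
    have hcast : ((Nat.choose k (r / j) : ℕ) : Matrix (Fin N) (Fin N) ℝ)
        = ((Nat.choose k (r / j) : ℝ)) • 1 := by
      rw [← Algebra.algebraMap_eq_smul_one, map_natCast]
    rw [hneg, hcast, smul_pow, one_pow, smul_mul_smul_comm, one_mul, smul_mul_assoc, one_mul]
    rw [hx, Emat_pow_natCast, Emat, ← Matrix.circulant_smul]
  rw [Finset.sum_congr rfl fun r _ => hterm r]
  rw [← circulant_sum, PhiMat_circulant]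
  refine congrArg Matrix.circulant (funext fun d => ?_)
  -- pointwise vector identity
  simp only [Finset.sum_apply, Pi.smul_apply, Pi.single_apply, smul_eq_mul]
  have hR : ∀ r ∈ Finset.range (j * (k + 1)), (d = -(r : Fin N)) ↔ r = (-d).val := by
    intro r hr
    simp only [Finset.mem_range] at hr
    rw [← neg_eq_iff_eq_neg, eq_comm, Fin.ext_iff, Fin.val_natCast,
      Nat.mod_eq_of_lt (lt_of_lt_of_le hr hjk), eq_comm]
  rw [Finset.sum_congr rfl (fun r hr => by rw [if_congr (hR r hr) rfl rfl])]
  rw [Finset.sum_congr rfl (fun r _ => (mul_ite _ _ _ _).trans (by rw [mul_one, mul_zero]))]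
  have hsum : ∀ R : ℕ, (∑ r ∈ Finset.range (j * (k + 1)),
      if r = R then ((-1 : ℝ) ^ (k + r / j)) * (Nat.choose k (r / j) : ℝ) else 0)
      = if R ∈ Finset.range (j * (k + 1)) then ((-1 : ℝ) ^ (k + R / j)) * (Nat.choose k (R / j) : ℝ) else 0 :=
    fun R => Finset.sum_ite_eq' _ _ _
  rw [hsum ((-d).val)]
  -- final case analysis
  by_cases hd : d = 0
  · subst hd
    simp only [neg_zero, Fin.val_zero, Finset.mem_range]
    rw [if_pos (by positivity)]
    simp [phiR]
  · have hdv : 0 < d.val := by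
      by_contra hcon
      push_neg at hcon
      exact hd (by apply Fin.ext; simp only [Fin.val_zero]; omega)
    have hdN : d.val < N := d.isLt
    have hnegval : (-d).val = N - d.val := by
      rw [Fin.neg_def]
      simp only []
      rw [Nat.mod_eq_of_lt (by omega)]
    rw [hnegval]
    simp only [Finset.mem_range]
    unfold phiR
    rw [if_neg (by omega)]
    by_cases hcase : d.val ≤ N - j * (k + 1)
    · rw [if_pos hcase, if_neg (by omega)]
    · rw [if_neg hcase, if_pos (by omega)]

lemma Pmat_eq (s : ℕ) (hs : s % N ≠ 0) :
    Pmat N s = 1 + (Emat (-1 : Fin N)) ^ s := by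
  rw [Emat_pow_natCast]
  ext m n
  simp only [Pmat, Matrix.of_apply, Matrix.add_apply, Matrix.one_apply, Emat,
    Matrix.circulant_apply, Pi.single_apply]
  have hsne : ((s : Fin N)) ≠ 0 := by
    rw [Ne, Fin.ext_iff, Fin.val_natCast, Fin.val_zero]
    exact hs
  have hiff : (m - n = -(s : Fin N)) ↔ (n = m + (s : Fin N)) := by
    constructor
    · intro hh
      rw [sub_eq_iff_eq_add] at hh
      rw [hh]
      abel
    · intro hh
      rw [hh]
      abel
  have hval : ((n : ℕ) = ((m : ℕ) + s) % N) ↔ (n = m + (s : Fin N)) := by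
    simp only [Fin.ext_iff, Fin.add_def, Fin.val_natCast, Fin.val_mk, Nat.add_mod_mod]
  have hcond : ((n : ℕ) = (m : ℕ) ∨ (n : ℕ) = ((m : ℕ) + s) % N)
      ↔ (n = m ∨ m - n = -(s : Fin N)) :=
    or_congr (Fin.val_eq_val n m) (hval.trans hiff.symm)
  have hNdvd : ¬ N ∣ s := by
    intro hdvd
    exact hs (Nat.mod_eq_zero_of_dvd hdvd)
  simp only [hcond]
  by_cases h1 : n = m
  · subst h1
    have h2 : ¬ (n - n = -(s : Fin N)) := by
      rw [sub_self]
      exact fun hc => hsne (neg_eq_zero.mp hc.symm)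
    simp [h2, hNdvd]
  · have hmn : ¬ m = n := fun hc => h1 hc.symm
    by_cases h2 : m - n = -(s : Fin N)
    · simp [h1, h2, hmn, hNdvd]
    · simp [h1, h2, hmn, hNdvd]

end Shift

theorem PhiMat_dyadic_decomposition (N k J : ℕ) (hN : 0 < N) (hk : 0 < k) (hJ : 0 < J)
    (h : 2 ^ J * (k + 1) < N) :
    PhiMat N k (2 ^ J) =
      (((List.range J).reverse.map fun i => (Pmat N (2 ^ i)) ^ (k + 1)).prod) * PhiMat N k 1 := by
  haveI : NeZero N := ⟨hN.ne'⟩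
  have hpow : (0:ℕ) < 2 ^ J := Nat.pow_pos (by norm_num)
  have h1N : (1:ℕ) * (k + 1) ≤ N := by
    have := Nat.le_mul_of_pos_left (k+1) hpow
    omega
  rw [PhiMat_eq k (2 ^ J) hpow (le_of_lt h), PhiMat_eq k 1 one_pos h1N]
  have hmap : ((List.range J).reverse.map fun i => (Pmat N (2 ^ i)) ^ (k + 1))
      = ((List.range J).reverse.map fun i => (1 + (Emat (-1 : Fin N)) ^ 2 ^ i) ^ (k + 1)) := by
    apply List.map_congr_left
    intro i hi
    have hiJ : i < J := by
      rw [List.mem_reverse, List.mem_range] at hi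
      exact hi
    have h2i : 2 ^ i < N := by
      calc 2 ^ i ≤ 2 ^ J := Nat.pow_le_pow_right (by norm_num) hiJ.le
      _ ≤ 2 ^ J * (k+1) := Nat.le_mul_of_pos_right _ (by omega)
      _ < N := h
    rw [Pmat_eq (2 ^ i) (by rw [Nat.mod_eq_of_lt h2i]; positivity)]
  rw [hmap]
  rw [show (∑ u ∈ Finset.range 1, (Emat (-1 : Fin N)) ^ u) = 1 by simp, one_mul, pow_one,
    ← aux_key]
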